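/- The derivations ℓ₀, ℓ₂, ℓ₄, ℓ₆ of the polynomial ring ℂ[λ₄, λ₆, λ₈, λ₁₀] satisfy the commutation relations: [ℓ₀, ℓ₂] = 2ℓ₂, [ℓ₀, ℓ₄] = 4ℓ₄, [ℓ₀, ℓ₆] = 6ℓ₆, [ℓ₂, ℓ₄] = (8/5)λ₆ ℓ₀ − (8/5)λ₄ ℓ₂ + 2 ℓ₆, [ℓ₂, ℓ₆] = (4/5)λ₈ ℓ₀ − (4/5)λ₄ ℓ₄, and [ℓ₄, ℓ₆] = −2λ₁₀ ℓ₀ + (6/5)λ₈ ℓ₂ − (6/5)λ₆ ℓ₄ + 2λ₄ ℓ₆, where for derivations the bracket is [A,B] = AB − BA and multiplication of a derivation by a polynomial is pointwise. -/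
import Mathlib


/- STATEMENT 4: commutation relations for the derivations ℓ₀, ℓ₂, ℓ₄, ℓ₆ of
   ℂ[lam4, lam6, lam8, lam10], where (ℓ₀,ℓ₂,ℓ₄,ℓ₆)ᵀ = T ∇_λ. -/

open MvPolynomial

noncomputable section

/-- The polynomial ring ℂ[lam4, lam6, lam8, lam10]; variable `X i` is λ_{2i+4}. -/
abbrev Rg2 : Type := MvPolynomial (Fin 4) ℂ

def lam4 : Rg2 := X 0
def lam6 : Rg2 := X 1
def lam8 : Rg2 := X 2
def lam10 : Rg2 := X 3

/-- Partial derivative ∂_{λ_{2i+4}}. -/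
def D (i : Fin 4) (p : Rg2) : Rg2 := pderiv i p

/-- ℓ₀ = 4lam4∂_{lam4} + 6lam6∂_{lam6} + 8lam8∂_{lam8} + 10lam10∂_{lam10}. -/
def ell0 (p : Rg2) : Rg2 :=
  4 * lam4 * D 0 p + 6 * lam6 * D 1 p + 8 * lam8 * D 2 p + 10 * lam10 * D 3 p

/-- ℓ₂ = 6lam6∂_{lam4} + (8lam8 − (12/5)lam4²)∂_{lam6} + (10lam10 − (8/5)lam4lam6)∂_{lam8} − (4/5)lam4lam8∂_{lam10}. -/
def ell2 (p : Rg2) : Rg2 :=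
  6 * lam6 * D 0 p + (8 * lam8 - C ((12 : ℂ) / 5) * lam4 ^ 2) * D 1 p +
    (10 * lam10 - C ((8 : ℂ) / 5) * lam4 * lam6) * D 2 p - C ((4 : ℂ) / 5) * lam4 * lam8 * D 3 p

/-- ℓ₄ = 8lam8∂_{lam4} + (10lam10 − (8/5)lam4lam6)∂_{lam6} + (4lam4lam8 − (12/5)lam6²)∂_{lam8}
  + (6lam4lam10 − (6/5)lam6lam8)∂_{lam10}. -/
def ell4 (p : Rg2) : Rg2 :=
  8 * lam8 * D 0 p + (10 * lam10 - C ((8 : ℂ) / 5) * lam4 * lam6) * D 1 p +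
    (4 * lam4 * lam8 - C ((12 : ℂ) / 5) * lam6 ^ 2) * D 2 p +
    (6 * lam4 * lam10 - C ((6 : ℂ) / 5) * lam6 * lam8) * D 3 p

/-- ℓ₆ = 10lam10∂_{lam4} − (4/5)lam4lam8∂_{lam6} + (6lam4lam10 − (6/5)lam6lam8)∂_{lam8}
  + (4lam6lam10 − (8/5)lam8²)∂_{lam10}. -/
def ell6 (p : Rg2) : Rg2 :=
  10 * lam10 * D 0 p - C ((4 : ℂ) / 5) * lam4 * lam8 * D 1 p +
    (6 * lam4 * lam10 - C ((6 : ℂ) / 5) * lam6 * lam8) * D 2 p +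
    (4 * lam6 * lam10 - C ((8 : ℂ) / 5) * lam8 ^ 2) * D 3 p


private lemma pderiv_swap {σ R : Type*} [CommSemiring R] [DecidableEq σ] (i j : σ)
    (p : MvPolynomial σ R) : pderiv i (pderiv j p) = pderiv j (pderiv i p) := by
  induction p using MvPolynomial.induction_on with
  | C a => simp
  | add p q hp hq => simp [hp, hq]
  | mul_X p k hp =>
    simp only [pderiv_mul, hp, pderiv_X, Pi.single_apply]
    split_ifs <;> simp_all [Pi.single_apply] <;> ring

@[simp] private lemma pderiv_ofNat (i : Fin 4) (n : ℕ) [n.AtLeastTwo] :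
    pderiv i (no_index (OfNat.ofNat n) : MvPolynomial (Fin 4) ℂ) = 0 := by
  simp [← map_ofNat (C : ℂ →+* MvPolynomial (Fin 4) ℂ) n]

set_option maxHeartbeats 4000000 in
theorem ell_commutation_relations :
    (∀ p : Rg2, ell0 (ell2 p) - ell2 (ell0 p) = 2 * ell2 p) ∧
    (∀ p : Rg2, ell0 (ell4 p) - ell4 (ell0 p) = 4 * ell4 p) ∧
    (∀ p : Rg2, ell0 (ell6 p) - ell6 (ell0 p) = 6 * ell6 p) ∧
    (∀ p : Rg2, ell2 (ell4 p) - ell4 (ell2 p) =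
      C ((8 : ℂ) / 5) * lam6 * ell0 p - C ((8 : ℂ) / 5) * lam4 * ell2 p + 2 * ell6 p) ∧
    (∀ p : Rg2, ell2 (ell6 p) - ell6 (ell2 p) =
      C ((4 : ℂ) / 5) * lam8 * ell0 p - C ((4 : ℂ) / 5) * lam4 * ell4 p) ∧
    (∀ p : Rg2, ell4 (ell6 p) - ell6 (ell4 p) =
      -2 * lam10 * ell0 p + C ((6 : ℂ) / 5) * lam8 * ell2 p - C ((6 : ℂ) / 5) * lam6 * ell4 p +
        2 * lam4 * ell6 p) := by
  have h5 : (5:Rg2) * C ((1:ℂ)/5) = 1 := by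
    rw [← map_ofNat (C : ℂ →+* Rg2) 5, ← C_mul]; norm_num
  have e12 : (C ((12:ℂ)/5) : Rg2) = 12 * C ((1:ℂ)/5) := by
    rw [← map_ofNat (C : ℂ →+* Rg2) 12, ← C_mul]; norm_num
  have e8 : (C ((8:ℂ)/5) : Rg2) = 8 * C ((1:ℂ)/5) := by
    rw [← map_ofNat (C : ℂ →+* Rg2) 8, ← C_mul]; norm_num
  have e6 : (C ((6:ℂ)/5) : Rg2) = 6 * C ((1:ℂ)/5) := by
    rw [← map_ofNat (C : ℂ →+* Rg2) 6, ← C_mul]; norm_num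
  have e4 : (C ((4:ℂ)/5) : Rg2) = 4 * C ((1:ℂ)/5) := by
    rw [← map_ofNat (C : ℂ →+* Rg2) 4, ← C_mul]; norm_num
  have h25 : (25:Rg2) ≠ 0 := by
    rw [← map_ofNat (C : ℂ →+* Rg2) 25]; exact C_ne_zero.mpr (by norm_num)
  refine ⟨fun p => ?_, fun p => ?_, fun p => ?_, fun p => ?_, fun p => ?_, fun p => ?_⟩ <;>
    simp [ell0, ell2, ell4, ell6, D, lam4, lam6, lam8, lam10, map_add, map_sub, pderiv_mul,
      pderiv_pow, pderiv_C, pderiv_X, Pi.single_apply, pderiv_swap]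
  · ring
  · ring
  · ring
  · simp only [e12, e8, e6, e4]
    refine mul_left_cancel₀ h25 ?_
    linear_combination ((-700)*(X 1)*(X 3)*(pderiv 3 p) - (600)*(X 1)*(X 2)*(pderiv 2 p) + (800)*(X 0)*(X 3)*(pderiv 2 p) + (800)*(X 0)*(X 2)*(pderiv 1 p) + (200)*(X 0)^2*(X 2)*(C ((1:ℂ)/5))*(pderiv 3 p) + (800)*(X 0)^2*(X 1)*(C ((1:ℂ)/5))*(pderiv 2 p)) * h5
  · simp only [e12, e8, e6, e4]
    refine mul_left_cancel₀ h25 ?_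
    linear_combination ((-800)*(X 2)*(X 3)*(pderiv 3 p) + (100)*(X 1)*(X 3)*(pderiv 2 p) + (1200)*(X 0)*(X 3)*(pderiv 1 p) + (400)*(X 0)*(X 1)*(X 2)*(C ((1:ℂ)/5))*(pderiv 3 p) + (200)*(X 0)^2*(X 2)*(C ((1:ℂ)/5))*(pderiv 2 p)) * h5
  · simp only [e12, e8, e6, e4]
    refine mul_left_cancel₀ h25 ?_
    linear_combination ((-600)*(X 2)*(X 3)*(pderiv 2 p) + (700)*(X 1)*(X 3)*(pderiv 1 p) + (600)*(X 1)^2*(X 2)*(C ((1:ℂ)/5))*(pderiv 3 p) + (200)*(X 0)*(X 1)*(X 3)*(pderiv 3 p) + (200)*(X 0)^2*(X 2)*(C ((1:ℂ)/5))*(pderiv 1 p)) * h5
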